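/- Symmetric Ekeland principle II. In the abstract symmetrization framework, let X be a Banach space and f : X → ℝ ∪ {+∞} a proper, bounded below, lower semicontinuous functional such that f(u^H) ≤ f(u) for all u ∈ S and all H ∈ ℋ*, and such that for every u in the effective domain of f there exists ξ ∈ S with f(ξ) ≤ f(u). Then for every ρ > 0 and σ > 0 and every u ∈ S with f(u) ≤ inf_X f + σρ, there exists v ∈ X such that: (a) ‖v − v*‖_V < (K(C_Θ+1)+1)ρ; (b) f(w) ≥ f(v) − σ‖w − v‖ for all w ∈ X; (c) f(v) ≤ f(u); (d) ‖v − u‖ ≤ ρ + ‖T_ρ u − u‖. -/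

import Mathlib

open Filter Topology Metric Set


theorem ekeland_real {Y : Type*} [MetricSpace Y] [CompleteSpace Y]
    (g : Y → ℝ) (hlsc : LowerSemicontinuous g)
    (c : ℝ) (hbd : ∀ x, c ≤ g x)
    (σ ρ : ℝ) (hσ : 0 < σ) (hρ : 0 < ρ)
    (x₀ : Y) (h0 : ∀ x, g x₀ ≤ g x + σ * ρ) :
    ∃ v, g v ≤ g x₀ ∧ dist v x₀ ≤ ρ ∧ ∀ w, g v ≤ g w + σ * dist w v := by
  set F : Y → Set Y := fun x => {w | g w + σ * dist w x ≤ g x} with hF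
  have hFself : ∀ x, x ∈ F x := by
    intro x; simp [hF]
  have hFtrans : ∀ x w, w ∈ F x → F w ⊆ F x := by
    intro x w hw z hz
    have htri : dist z x ≤ dist z w + dist w x := dist_triangle z w x
    simp only [hF, Set.mem_setOf_eq] at hw hz ⊢
    nlinarith [hσ]
  have hFne : ∀ x, (g '' F x).Nonempty := fun x => ⟨g x, x, hFself x, rfl⟩
  have hFbdd : ∀ x, BddBelow (g '' F x) := by
    intro x; exact ⟨c, by rintro y ⟨z, _, rfl⟩; exact hbd z⟩
  have hstep : ∀ x : Y, ∀ n : ℕ, ∃ w, w ∈ F x ∧ g w < sInf (g '' F x) + 1 / (n + 1) := by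
    intro x n
    have hpos : (0:ℝ) < 1 / (n + 1) := by positivity
    have : sInf (g '' F x) < sInf (g '' F x) + 1 / (n + 1) := by linarith
    obtain ⟨y, ⟨w, hw, rfl⟩, hy⟩ := exists_lt_of_csInf_lt (hFne x) this
    exact ⟨w, hw, hy⟩
  let seq : ℕ → Y := fun n => Nat.rec x₀ (fun n xn => Classical.choose (hstep xn n)) n
  have hseq0 : seq 0 = x₀ := rfl
  have hseq : ∀ n, seq (n+1) ∈ F (seq n) ∧
      g (seq (n+1)) < sInf (g '' F (seq n)) + 1 / (n + 1) := by
    intro n; exact Classical.choose_spec (hstep (seq n) n)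
  have hchain : ∀ m n, m ≤ n → seq n ∈ F (seq m) := by
    intro m n hmn
    induction n, hmn using Nat.le_induction with
    | base => exact hFself (seq m)
    | succ n hmn ih => exact hFtrans (seq m) (seq n) ih (hseq n).1
  -- Cauchy
  have hdist : ∀ n, σ * dist (seq (n+1)) (seq n) ≤ g (seq n) - g (seq (n+1)) := by
    intro n; have := (hseq n).1; simp only [hF, Set.mem_setOf_eq] at this; linarith
  have hmono : ∀ m n, m ≤ n → g (seq n) ≤ g (seq m) := by
    intro m n hmn
    induction n, hmn using Nat.le_induction with
    | base => exact le_refl _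
    | succ n hmn ih =>
      have := hdist n
      have h2 : (0:ℝ) ≤ σ * dist (seq (n+1)) (seq n) := by positivity
      linarith
  have hsum : ∀ n, ∑ k ∈ Finset.range n, dist (seq (k+1)) (seq k) ≤ (g x₀ - c) / σ := by
    intro n
    have h1 : ∀ n, σ * ∑ k ∈ Finset.range n, dist (seq (k+1)) (seq k)
        ≤ g (seq 0) - g (seq n) := by
      intro n
      induction n with
      | zero => simp
      | succ n ih =>
        rw [Finset.sum_range_succ, mul_add]
        have := hdist n
        linarith
    have h2 : g (seq 0) - g (seq n) ≤ g x₀ - c := by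
      rw [hseq0]; have := hbd (seq n); linarith
    rw [le_div_iff₀ hσ]
    have := h1 n
    have := h2
    nlinarith
  have hsummable : Summable (fun n => dist (seq (n+1)) (seq n)) :=
    summable_of_sum_range_le (fun n => dist_nonneg) hsum
  have hsummable' : Summable (fun n => dist (seq n) (seq (n+1))) := by
    simpa [dist_comm] using hsummable
  have hcauchy : CauchySeq seq := cauchySeq_of_summable_dist hsummable'
  obtain ⟨v, hv⟩ := cauchySeq_tendsto_of_complete hcauchy
  have hFclosed : ∀ x, IsClosed (F x) := by
    intro x
    have : LowerSemicontinuous (fun w => g w + σ * dist w x) := by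
      exact hlsc.add
        ((continuous_const.mul (continuous_id.dist continuous_const)).lowerSemicontinuous)
    exact this.isClosed_preimage (g x)
  have hvF : ∀ m, v ∈ F (seq m) := by
    intro m
    apply (hFclosed (seq m)).mem_of_tendsto hv
    filter_upwards [eventually_ge_atTop m] with n hn
    exact hchain m n hn
  have hv0 : v ∈ F x₀ := by rw [← hseq0]; exact hvF 0
  have hgv0 : g v + σ * dist v x₀ ≤ g x₀ := hv0
  have hd0 : (0:ℝ) ≤ σ * dist v x₀ := by positivity
  refine ⟨v, by linarith, ?_, ?_⟩
  · have := h0 v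
    have h3 : σ * dist v x₀ ≤ σ * ρ := by linarith
    exact le_of_mul_le_mul_left (by linarith) hσ
  · intro w
    by_contra hcon
    push_neg at hcon
    have hwFv : w ∈ F v := by
      simp only [hF, Set.mem_setOf_eq]; linarith
    have hwFn : ∀ n, w ∈ F (seq n) := fun n => hFtrans (seq n) v (hvF n) hwFv
    have hgvw : ∀ n : ℕ, g v < g w + 1 / (n + 1) := by
      intro n
      have h1 : g (seq (n+1)) < sInf (g '' F (seq n)) + 1 / (n+1) := (hseq n).2
      have h2 : sInf (g '' F (seq n)) ≤ g w :=
        csInf_le (hFbdd (seq n)) ⟨w, hwFn n, rfl⟩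
      have h3 : g v ≤ g (seq (n+1)) := by
        have := hvF (n+1)
        simp only [hF, Set.mem_setOf_eq] at this
        nlinarith [dist_nonneg (x := v) (y := seq (n+1)), hσ]
      linarith
    have hle : g v ≤ g w := by
      by_contra hlt
      push_neg at hlt
      obtain ⟨n, hn⟩ := exists_nat_one_div_lt (show (0:ℝ) < g v - g w by linarith)
      have := hgvw n
      linarith
    nlinarith [dist_nonneg (x := w) (y := v), hσ]


theorem symmetric_ekeland_II
    {X : Type*} [NormedAddCommGroup X] [NormedSpace ℝ X] [CompleteSpace X]
    {V : Type*} [NormedAddCommGroup V] [NormedSpace ℝ V] [CompleteSpace V]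
    {W : Type*} [NormedAddCommGroup W] [NormedSpace ℝ W] [CompleteSpace W]
    (ι : X →L[ℝ] V) (κ : V →L[ℝ] W)
    (K : ℝ) (hK : 0 < K) (hιK : ∀ u : X, ‖ι u‖ ≤ K * ‖u‖)
    (S : Set X)
    {P : Type*} [TopologicalSpace P] [PathConnectedSpace P]
    (pol : X → P → X) (sy : X → X)
    (hpolS : ∀ u ∈ S, ∀ H : P, pol u H ∈ S)
    (hsyS : ∀ u : X, sy u ∈ S)
    (hpolCont : ContinuousOn (fun q : X × P => pol q.1 q.2) (S ×ˢ Set.univ))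
    (hsypol : ∀ u ∈ S, ∀ H : P,
      pol (sy u) H = sy u ∧ sy (pol u H) = sy u ∧ pol (pol u H) H = pol u H)
    (happrox : ∃ Hs : ℕ → P, ∀ u ∈ S,
      Filter.Tendsto (fun m => ι (List.foldl pol u ((List.range m).map Hs)))
        Filter.atTop (nhds (ι (sy u))))
    (hpolContr : ∀ u ∈ S, ∀ v ∈ S, ∀ H : P, ‖ι (pol u H) - ι (pol v H)‖ ≤ ‖ι u - ι v‖)
    (Θ : X → X) (CΘ : ℝ) (hCΘ : 0 < CΘ)
    (hΘS : ∀ u : X, Θ u ∈ S) (hΘid : ∀ u ∈ S, Θ u = u)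
    (hΘlip : ∀ u v : X, ‖ι (Θ u) - ι (Θ v)‖ ≤ CΘ * ‖ι u - ι v‖)
    (hpolext : ∀ u : X, ∀ H : P, pol u H = pol (Θ u) H)
    (hsyext : ∀ u : X, sy u = sy (Θ u))
    (T : ℝ → X → X)
    (hTS : ∀ ρ > (0:ℝ), ∀ u ∈ S, T ρ u ∈ S)
    (hTpol : ∀ ρ > (0:ℝ), ∀ u ∈ S, ∃ l : List P, T ρ u = List.foldl pol u l)
    (hTsy : ∀ ρ > (0:ℝ), ∀ u ∈ S, sy (T ρ u) = sy u)
    (hTapprox : ∀ ρ > (0:ℝ), ∀ u ∈ S, ‖ι (T ρ u) - ι (sy u)‖ < ρ)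
    (f : X → EReal)
    (hfproper : ∃ u, f u ≠ ⊤)
    (hfbdd : ∃ c : ℝ, ∀ u, (c : EReal) ≤ f u)
    (hflsc : LowerSemicontinuous f)
    (hfpol : ∀ u ∈ S, ∀ H : P, f (pol u H) ≤ f u)
    (hfdom : ∀ u : X, f u ≠ ⊤ → ∃ ξ ∈ S, f ξ ≤ f u)
    (ρ σ : ℝ) (hρ : 0 < ρ) (hσ : 0 < σ)
    (u : X) (hu : u ∈ S)
    (hfu : f u ≤ (⨅ w, f w) + ((σ * ρ : ℝ) : EReal)) :
    ∃ v : X,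
      ‖ι v - ι (sy v)‖ < (K * (CΘ + 1) + 1) * ρ ∧
      (∀ w : X, f v - ((σ * ‖w - v‖ : ℝ) : EReal) ≤ f w) ∧
      f v ≤ f u ∧
      ‖v - u‖ ≤ ρ + ‖T ρ u - u‖ := by
  classical
  -- preliminary list/polarization lemmas
  have hfoldS : ∀ (l : List P) (a : X), a ∈ S → List.foldl pol a l ∈ S := by
    intro l
    induction l with
    | nil => intro a ha; simpa using ha
    | cons H t ih => intro a ha; exact ih _ (hpolS a ha H)
  have hfoldf : ∀ (l : List P) (a : X), a ∈ S → f (List.foldl pol a l) ≤ f a := by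
    intro l
    induction l with
    | nil => intro a ha; simp
    | cons H t ih =>
      intro a ha
      exact le_trans (ih _ (hpolS a ha H)) (hfpol a ha H)
  have hfoldContr : ∀ (l : List P) (a b : X), a ∈ S → b ∈ S →
      ‖ι (List.foldl pol a l) - ι (List.foldl pol b l)‖ ≤ ‖ι a - ι b‖ := by
    intro l
    induction l with
    | nil => intro a b _ _; simp
    | cons H t ih =>
      intro a b ha hb
      exact le_trans (ih _ _ (hpolS a ha H) (hpolS b hb H)) (hpolContr a ha b hb H)
  have hsyLipS : ∀ a ∈ S, ∀ b ∈ S, ‖ι (sy a) - ι (sy b)‖ ≤ ‖ι a - ι b‖ := by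
    obtain ⟨Hs, hHs⟩ := happrox
    intro a ha b hb
    have ta := hHs a ha
    have tb := hHs b hb
    have hT : Filter.Tendsto
        (fun m => ‖ι (List.foldl pol a ((List.range m).map Hs)) -
          ι (List.foldl pol b ((List.range m).map Hs))‖) Filter.atTop
        (nhds ‖ι (sy a) - ι (sy b)‖) := (ta.sub tb).norm
    exact le_of_tendsto hT (Filter.Eventually.of_forall fun m =>
      hfoldContr ((List.range m).map Hs) a b ha hb)
  have hsyLip : ∀ a b : X, ‖ι (sy a) - ι (sy b)‖ ≤ CΘ * ‖ι a - ι b‖ := by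
    intro a b
    rw [hsyext a, hsyext b]
    exact le_trans (hsyLipS (Θ a) (hΘS a) (Θ b) (hΘS b)) (hΘlip a b)
  -- basic facts about f
  obtain ⟨c, hc⟩ := hfbdd
  obtain ⟨u0, hu0⟩ := hfproper
  have hne_bot : ∀ x : X, f x ≠ ⊥ := by
    intro x h
    have := hc x
    rw [h, le_bot_iff] at this
    exact EReal.coe_ne_bot c this
  have hinf_lt_top : (⨅ w, f w) < ⊤ := lt_of_le_of_lt (iInf_le f u0) hu0.lt_top
  have hfu_ne_top : f u ≠ ⊤ := by
    intro h
    have : ((⨅ w, f w) + ((σ * ρ : ℝ) : EReal)) < ⊤ :=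
      EReal.add_lt_top hinf_lt_top.ne (EReal.coe_ne_top _)
    rw [h] at hfu
    exact absurd (top_le_iff.mp hfu) this.ne
  set x₀ : X := T ρ u with hx₀
  have hx₀S : x₀ ∈ S := hTS ρ hρ u hu
  have hfx₀u : f x₀ ≤ f u := by
    obtain ⟨l, hl⟩ := hTpol ρ hρ u hu
    rw [hx₀, hl]
    exact hfoldf l u hu
  have hfx₀_ne_top : f x₀ ≠ ⊤ := fun h => hfu_ne_top (top_le_iff.mp (h ▸ hfx₀u))
  set fr : ℝ := (f x₀).toReal with hfr
  have hfrcoe : ((fr : ℝ) : EReal) = f x₀ := EReal.coe_toReal hfx₀_ne_top (hne_bot x₀)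
  set C : EReal := ((fr + 1 : ℝ) : EReal) with hC
  set g : X → ℝ := fun x => (min (f x) C).toReal with hg
  have hmin : ∀ x : X, min (f x) C ≠ ⊥ ∧ min (f x) C ≠ ⊤ := by
    intro x
    rcases le_total (f x) C with h | h
    · rw [min_eq_left h]
      exact ⟨hne_bot x, fun ht => EReal.coe_ne_top _ (top_le_iff.mp (ht ▸ h))⟩
    · rw [min_eq_right h]
      exact ⟨EReal.coe_ne_bot _, EReal.coe_ne_top _⟩
  have hgcoe : ∀ x : X, ((g x : ℝ) : EReal) = min (f x) C := fun x =>
    EReal.coe_toReal (hmin x).2 (hmin x).1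
  have hglsc : LowerSemicontinuous g := by
    intro x a ha
    have h1 : (a : EReal) < min (f x) C := by
      rw [← hgcoe x]
      exact_mod_cast ha
    have haC : (a : EReal) < C := h1.trans_le (min_le_right _ _)
    filter_upwards [hflsc x a (h1.trans_le (min_le_left _ _))] with y hy
    have h2 : (a : EReal) < min (f y) C := lt_min hy haC
    rw [← hgcoe y] at h2
    exact_mod_cast h2
  have hgb : ∀ x : X, min c (fr + 1) ≤ g x := by
    intro x
    have h1 : ((min c (fr + 1) : ℝ) : EReal) ≤ f x :=
      le_trans (by exact_mod_cast min_le_left c (fr + 1)) (hc x)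
    have h2 : ((min c (fr + 1) : ℝ) : EReal) ≤ C := by
      rw [hC]; exact_mod_cast min_le_right c (fr + 1)
    have h3 : ((min c (fr + 1) : ℝ) : EReal) ≤ ((g x : ℝ) : EReal) := by
      rw [hgcoe x]; exact le_min h1 h2
    exact_mod_cast h3
  have hgx₀ : g x₀ = fr := by
    have h1 : f x₀ ≤ C := by
      rw [← hfrcoe, hC]
      exact_mod_cast (by linarith : fr ≤ fr + 1)
    rw [hg]
    simp only [min_eq_left h1]
    exact hfr.symm
  have h0 : ∀ x : X, g x₀ ≤ g x + σ * ρ := by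
    intro x
    rcases le_total (f x) C with h | h
    · have hcoe : ((g x : ℝ) : EReal) = f x := by rw [hgcoe x, min_eq_left h]
      have h1 : f x₀ ≤ f x + ((σ * ρ : ℝ) : EReal) := by
        refine le_trans (le_trans hfx₀u hfu) ?_
        exact add_le_add_left (iInf_le f x) _
      rw [← hfrcoe, ← hcoe, ← EReal.coe_add] at h1
      rw [hgx₀]
      exact_mod_cast h1
    · have hcoe : ((g x : ℝ) : EReal) = C := by rw [hgcoe x, min_eq_right h]
      have h2 : g x = fr + 1 := by
        have := hcoe
        rw [hC] at this
        exact_mod_cast this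
      rw [hgx₀, h2]
      nlinarith
  obtain ⟨v, hv1, hv2, hv3⟩ :=
    ekeland_real g hglsc (min c (fr + 1)) hgb σ ρ hσ hρ x₀ h0
  have hgvfr : g v ≤ fr := hgx₀ ▸ hv1
  have hfveq : ((g v : ℝ) : EReal) = f v := by
    rcases le_total (f v) C with h | h
    · rw [hgcoe v, min_eq_left h]
    · exfalso
      have hcoe : ((g v : ℝ) : EReal) = C := by rw [hgcoe v, min_eq_right h]
      have h2 : g v = fr + 1 := by
        rw [hC] at hcoe
        exact_mod_cast hcoe
      linarith [hgvfr, h2]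
  have hfvu : f v ≤ f u := by
    refine le_trans ?_ hfx₀u
    rw [← hfveq, ← hfrcoe]
    exact_mod_cast hgvfr
  have hdvx : ‖v - x₀‖ ≤ ρ := by rw [← dist_eq_norm]; exact hv2
  refine ⟨v, ?_, ?_, hfvu, ?_⟩
  · -- (a)
    have h1 : ‖ι v - ι x₀‖ ≤ K * ρ := by
      have : ι v - ι x₀ = ι (v - x₀) := by rw [map_sub]
      rw [this]
      calc ‖ι (v - x₀)‖ ≤ K * ‖v - x₀‖ := hιK _
        _ ≤ K * ρ := by nlinarith
    have h2 : ‖ι x₀ - ι (sy x₀)‖ < ρ := by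
      rw [hx₀, hTsy ρ hρ u hu]
      exact hTapprox ρ hρ u hu
    have h3 : ‖ι (sy x₀) - ι (sy v)‖ ≤ CΘ * (K * ρ) := by
      calc ‖ι (sy x₀) - ι (sy v)‖ ≤ CΘ * ‖ι x₀ - ι v‖ := hsyLip x₀ v
        _ = CΘ * ‖ι v - ι x₀‖ := by rw [norm_sub_rev]
        _ ≤ CΘ * (K * ρ) := by nlinarith
    calc ‖ι v - ι (sy v)‖ ≤ ‖ι v - ι x₀‖ + ‖ι x₀ - ι (sy v)‖ :=
          norm_sub_le_norm_sub_add_norm_sub _ _ _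
      _ ≤ ‖ι v - ι x₀‖ + (‖ι x₀ - ι (sy x₀)‖ + ‖ι (sy x₀) - ι (sy v)‖) := by
          linarith [norm_sub_le_norm_sub_add_norm_sub (ι x₀) (ι (sy x₀)) (ι (sy v))]
      _ < (K * (CΘ + 1) + 1) * ρ := by nlinarith
  · -- (b)
    intro w
    have h3 := hv3 w
    rw [dist_eq_norm] at h3
    have hcoew : ((g w : ℝ) : EReal) ≤ f w := by
      rw [hgcoe w]; exact min_le_left _ _
    have h4 : f v ≤ f w + ((σ * ‖w - v‖ : ℝ) : EReal) := by
      rw [← hfveq]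
      calc ((g v : ℝ) : EReal) ≤ ((g w + σ * ‖w - v‖ : ℝ) : EReal) := by exact_mod_cast h3
        _ = ((g w : ℝ) : EReal) + ((σ * ‖w - v‖ : ℝ) : EReal) := by exact_mod_cast EReal.coe_add _ _
        _ ≤ f w + ((σ * ‖w - v‖ : ℝ) : EReal) := add_le_add_left hcoew _
    exact (EReal.sub_le_iff_le_add (Or.inl (EReal.coe_ne_bot _))
      (Or.inl (EReal.coe_ne_top _))).mpr h4
  · -- (d)
    calc ‖v - u‖ ≤ ‖v - x₀‖ + ‖x₀ - u‖ := norm_sub_le_norm_sub_add_norm_sub _ _ _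
      _ ≤ ρ + ‖T ρ u - u‖ := by rw [hx₀]; linarith [hdvx]
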